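/- arXiv:1501.03051 — 8 statements merged into one kernel-verified Lean document; each statement's English description precedes it below -/
import Mathlib

section
/- In the ring R of rational polynomials with integer constant term, the element X + 1 is irreducible: it is not a unit, and whenever X + 1 = a·b with a, b ∈ R, then a or b is a unit of R. -/
open Polynomial

noncomputable def R : Subring (Polynomial ℚ) where
  carrier := {f | ∃ n : ℤ, f.coeff 0 = (n : ℚ)}
  zero_mem' := ⟨0, by simp⟩
  one_mem' := ⟨1, by simp⟩
  add_mem' := by rintro f g ⟨a, ha⟩ ⟨b, hb⟩; exact ⟨a + b, by simp [ha, hb]⟩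
  neg_mem' := by rintro f ⟨a, ha⟩; exact ⟨-a, by simp [ha]⟩
  mul_mem' := by rintro f g ⟨a, ha⟩ ⟨b, hb⟩; exact ⟨a * b, by simp [Polynomial.mul_coeff_zero, ha, hb]⟩

lemma mem_R {f : Polynomial ℚ} : f ∈ R ↔ ∃ n : ℤ, f.coeff 0 = (n : ℚ) := Iff.rfl

lemma unit_of_pm (a : R) (h : (a : Polynomial ℚ) = 1 ∨ (a : Polynomial ℚ) = -1) :
    IsUnit a := by
  refine IsUnit.of_mul_eq_one (a := a) a (Subtype.ext ?_)
  push_cast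
  rcases h with h | h <;> simp [h]

lemma const_pm (a : R) (c : ℚ) (hc : (a : Polynomial ℚ) = C c)
    (b : R) (hb : c * ((b : Polynomial ℚ)).coeff 0 = 1) : IsUnit a := by
  obtain ⟨n, hn⟩ := a.2
  obtain ⟨m, hm⟩ := b.2
  rw [hc] at hn
  simp only [coeff_C_zero] at hn
  rw [hn, hm] at hb
  have : (n * m : ℤ) = 1 := by exact_mod_cast hb
  have hn1 : n = 1 ∨ n = -1 := Int.isUnit_iff.mp (IsUnit.of_mul_eq_one _ this)
  apply unit_of_pm
  rcases hn1 with h | h <;> rw [hc, hn, h] <;> push_cast <;> simp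

/-- X + 1 is irreducible in R. -/
theorem stmt_3 : Irreducible (⟨X + 1, mem_R.mpr ⟨1, by simp⟩⟩ : R) := by
  constructor
  · rintro ⟨u, hu⟩
    have hv : (⟨X + 1, mem_R.mpr ⟨1, by simp⟩⟩ : R) * ↑u⁻¹ = 1 := by
      rw [← hu]; exact u.mul_inv
    have : IsUnit (X + 1 : Polynomial ℚ) :=
      IsUnit.of_mul_eq_one _ (congrArg (fun x : R => (x : Polynomial ℚ)) hv)
    obtain ⟨c, -, hc⟩ := Polynomial.isUnit_iff.mp this
    have := congrArg (fun p => coeff p 1) hc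
    simpa [coeff_one] using this
  · rintro a b hab
    have hab' : (X + 1 : Polynomial ℚ) = (a : Polynomial ℚ) * b :=
      congrArg (fun x : R => (x : Polynomial ℚ)) hab
    have hirr : Irreducible (X + 1 : Polynomial ℚ) := by
      have := irreducible_X_sub_C (-1 : ℚ)
      rw [map_neg, map_one, sub_neg_eq_add] at this
      exact this
    have h0 : ((a : Polynomial ℚ) * b).coeff 0 = 1 := by
      rw [← hab']; simp
    rw [mul_coeff_zero] at h0
    rcases hirr.isUnit_or_isUnit hab' with h | h
    · obtain ⟨c, -, hc⟩ := isUnit_iff.mp h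
      left
      rw [← hc, coeff_C_zero] at h0
      exact const_pm a c hc.symm b h0
    · obtain ⟨c, -, hc⟩ := isUnit_iff.mp h
      right
      refine const_pm b c hc.symm a ?_
      rw [← hc, coeff_C_zero] at h0
      linarith
end

section
/- In the ring R of rational polynomials with integer constant term, the element X - 1 is irreducible: it is not a unit, and whenever X - 1 = a·b with a, b ∈ R, then a or b is a unit of R. -/
open Polynomial

lemma key (a b : R) (h : (a : Polynomial ℚ) * (b : Polynomial ℚ) = X - 1)
    (ha : IsUnit (a : Polynomial ℚ)) : IsUnit a := by
  obtain ⟨q, hq, hC⟩ := Polynomial.isUnit_iff.mp ha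
  obtain ⟨n, hn⟩ := a.2
  obtain ⟨m, hm⟩ := b.2
  have h0 : (a : Polynomial ℚ).coeff 0 * (b : Polynomial ℚ).coeff 0 = -1 := by
    have := congrArg (fun f => Polynomial.coeff f 0) h
    simpa [Polynomial.mul_coeff_zero] using this
  rw [hn, hm] at h0
  have hnm : n * m = -1 := by exact_mod_cast h0
  have hn1 : n = 1 ∨ n = -1 :=
    Int.isUnit_iff.mp (IsUnit.of_mul_eq_one (a := n) (-m) (by linarith))
  have haC : (a : Polynomial ℚ) = C ((n : ℤ) : ℚ) := by
    have hqn : q = ((n : ℤ) : ℚ) := by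
      rw [← hn, ← hC]; simp
    rw [← hC, hqn]
  refine IsUnit.of_mul_eq_one (a := a) a (Subtype.ext ?_)
  have : ((a * a : R) : Polynomial ℚ) = (a : Polynomial ℚ) * (a : Polynomial ℚ) := rfl
  rw [this, haC, ← C_mul]
  rcases hn1 with h1 | h1 <;> simp [h1]

/-- X - 1 is irreducible in R. -/
theorem stmt_4 : Irreducible (⟨X - 1, mem_R.mpr ⟨-1, by simp⟩⟩ : R) := by
  have hirr : Irreducible (X - C (1 : ℚ)) := Polynomial.irreducible_X_sub_C 1
  constructor
  · intro h
    have : IsUnit (X - 1 : Polynomial ℚ) := h.map R.subtype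
    rw [show (X - 1 : Polynomial ℚ) = X - C 1 by simp] at this
    exact hirr.not_isUnit this
  · intro a b hab
    have h : (a : Polynomial ℚ) * (b : Polynomial ℚ) = X - 1 :=
      (congrArg Subtype.val hab).symm
    have h' : X - C (1 : ℚ) = (a : Polynomial ℚ) * (b : Polynomial ℚ) := by
      rw [h]; simp
    rcases hirr.isUnit_or_isUnit h' with hu | hu
    · exact Or.inl (key a b h hu)
    · exact Or.inr (key b a (by rw [mul_comm]; exact h) hu)
end

section
/- For every positive integer n, the element (1/n)·X + 1 of the ring R of rational polynomials with integer constant term is irreducible in R. -/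
open Polynomial

lemma unit_of_pm_one (a : R) (h : (a : Polynomial ℚ) = C 1 ∨ (a : Polynomial ℚ) = C (-1)) :
    IsUnit a := by
  apply IsUnit.of_mul_eq_one a
  apply Subtype.ext
  rw [Subring.coe_mul]
  rcases h with h | h <;> rw [h] <;> simp [← C_mul]

lemma const_factor_unit (a b : R) (hd : (a : Polynomial ℚ).natDegree = 0)
    (hc : (a : Polynomial ℚ).coeff 0 * (b : Polynomial ℚ).coeff 0 = 1) : IsUnit a := by
  obtain ⟨m, hm⟩ := a.2
  obtain ⟨k, hk⟩ := b.2
  have hmk : m * k = 1 := by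
    have : (m : ℚ) * (k : ℚ) = 1 := by rw [← hm, ← hk]; exact hc
    exact_mod_cast this
  have haC : (a : Polynomial ℚ) = C ((a : Polynomial ℚ).coeff 0) :=
    Polynomial.eq_C_of_natDegree_eq_zero hd
  rcases (Int.mul_eq_one_iff_eq_one_or_neg_one.mp hmk) with ⟨h1, _⟩ | ⟨h1, _⟩
  · exact unit_of_pm_one a (Or.inl (by rw [haC, hm, h1]; norm_num))
  · exact unit_of_pm_one a (Or.inr (by rw [haC, hm, h1]; norm_num))

/-- For every positive integer n, (1/n)·X + 1 is irreducible in R. -/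
theorem stmt_5 (n : ℕ) (hn : 0 < n) :
    Irreducible (⟨C (1 / (n : ℚ)) * X + 1, mem_R.mpr ⟨1, by simp⟩⟩ : R) := by
  have hn0 : (n : ℚ) ≠ 0 := Nat.cast_ne_zero.mpr hn.ne'
  have ha : (1 / (n : ℚ)) ≠ 0 := one_div_ne_zero hn0
  set f : Polynomial ℚ := C (1 / (n : ℚ)) * X + 1 with hf
  have hfeq : f = C (1 / (n : ℚ)) * X + C 1 := by simp [hf]
  have hdeg : f.natDegree = 1 := by rw [hfeq]; exact natDegree_linear ha
  have hf0 : f ≠ 0 := fun h => by simp [h] at hdeg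
  have hcoeff : f.coeff 0 = 1 := by simp [hfeq]
  constructor
  · intro hu
    have := hu.map R.subtype
    have h0 := Polynomial.natDegree_eq_zero_of_isUnit this
    simp only [Subring.coe_subtype] at h0
    rw [← hf] at h0
    omega
  · rintro a b hab
    have hval : f = (a : Polynomial ℚ) * (b : Polynomial ℚ) := congrArg Subtype.val hab
    have ha0 : (a : Polynomial ℚ) ≠ 0 := fun h => hf0 (by rw [hval, h, zero_mul])
    have hb0 : (b : Polynomial ℚ) ≠ 0 := fun h => hf0 (by rw [hval, h, mul_zero])
    have hdsum : (a : Polynomial ℚ).natDegree + (b : Polynomial ℚ).natDegree = 1 := by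
      rw [← natDegree_mul ha0 hb0, ← hval, hdeg]
    have hcc : (a : Polynomial ℚ).coeff 0 * (b : Polynomial ℚ).coeff 0 = 1 := by
      rw [← Polynomial.mul_coeff_zero, ← hval, hcoeff]
    rcases Nat.eq_zero_or_pos (a : Polynomial ℚ).natDegree with h | h
    · exact Or.inl (const_factor_unit a b h hcc)
    · have hb' : (b : Polynomial ℚ).natDegree = 0 := by omega
      exact Or.inr (const_factor_unit b a hb' (by rw [mul_comm]; exact hcc))
end

section
/- For every positive rational number c, the polynomial c·X² - 1, viewed as an element of the ring R of rational polynomials with integer constant term, is irreducible in R if and only if c is not the square of a rational number. -/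
open Polynomial

lemma R_not_unit {f : R} (h : 0 < (f : ℚ[X]).natDegree) : ¬ IsUnit f := by
  intro hu
  have h2 := Polynomial.natDegree_eq_zero_of_isUnit (hu.map R.subtype)
  rw [show R.subtype f = (f : ℚ[X]) from rfl] at h2
  omega

lemma R_unit_of_eq_one {f : R} (h : (f : ℚ[X]) = 1) : IsUnit f := by
  have : f = 1 := Subtype.ext h
  simp [this]

lemma R_unit_of_eq_neg_one {f : R} (h : (f : ℚ[X]) = -1) : IsUnit f := by
  have : f = -1 := Subtype.ext (by simpa using h)
  rw [this]
  exact isUnit_one.neg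

/-- For positive rational c, the element c·X² - 1 of R is irreducible
iff c is not the square of a rational. -/
theorem stmt_6 (c : ℚ) (hc : 0 < c) :
    Irreducible (⟨C c * X ^ 2 - 1, mem_R.mpr ⟨-1, by simp⟩⟩ : R) ↔
      ¬∃ q : ℚ, q ^ 2 = c := by
  have hc0 : c ≠ 0 := hc.ne'
  have hpdeg : (C c * X ^ 2 - 1 : ℚ[X]).natDegree = 2 := by
    compute_degree!
  constructor
  · rintro h ⟨q, hq⟩
    have hq0 : q ≠ 0 := by rintro rfl; simp at hq; exact hc0 hq.symm
    set f : R := ⟨C q * X - 1, mem_R.mpr ⟨-1, by simp⟩⟩ with hf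
    set g : R := ⟨C q * X + 1, mem_R.mpr ⟨1, by simp⟩⟩ with hg
    have hfg : (⟨C c * X ^ 2 - 1, mem_R.mpr ⟨-1, by simp⟩⟩ : R) = f * g := by
      apply Subtype.ext
      show C c * X ^ 2 - 1 = (C q * X - 1) * (C q * X + 1)
      have : C c = C q * C q := by rw [← C_mul]; rw [show q * q = c by rw [← hq]; ring]
      rw [this]; ring
    rcases h.isUnit_or_isUnit hfg with hu | hu
    · exact R_not_unit (by show 0 < (C q * X - 1 : ℚ[X]).natDegree; rw [show (C q * X - 1 : ℚ[X]).natDegree = 1 by compute_degree!]; omega) hu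
    · exact R_not_unit (by show 0 < (C q * X + 1 : ℚ[X]).natDegree; rw [show (C q * X + 1 : ℚ[X]).natDegree = 1 by compute_degree!]; omega) hu
  · intro hns
    constructor
    · exact R_not_unit (by show 0 < (C c * X ^ 2 - 1 : ℚ[X]).natDegree; omega)
    · rintro f g hfg
      have hval : C c * X ^ 2 - 1 = (f : ℚ[X]) * (g : ℚ[X]) := congrArg Subtype.val hfg
      obtain ⟨m, hm⟩ := f.2
      obtain ⟨n, hn⟩ := g.2
      have hf0 : (f : ℚ[X]) ≠ 0 := by
        intro h0
        rw [h0, zero_mul] at hval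
        have := congrArg (fun p : ℚ[X] => p.coeff 0) hval
        simp at this
      have hg0 : (g : ℚ[X]) ≠ 0 := by
        intro h0
        rw [h0, mul_zero] at hval
        have := congrArg (fun p : ℚ[X] => p.coeff 0) hval
        simp at this
      have hdeg : (f : ℚ[X]).natDegree + (g : ℚ[X]).natDegree = 2 := by
        rw [← Polynomial.natDegree_mul hf0 hg0, ← hval, hpdeg]
      have h0 : (f : ℚ[X]).coeff 0 * (g : ℚ[X]).coeff 0 = -1 := by
        have := congrArg (fun p : ℚ[X] => p.coeff 0) hval
        simpa [Polynomial.mul_coeff_zero] using this.symm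
      have hmn : (m : ℚ) * n = -1 := by rw [← hm, ← hn]; exact h0
      have hmnz : m * n = -1 := by exact_mod_cast hmn
      have hmcases : (m = 1 ∧ n = -1) ∨ (m = -1 ∧ n = 1) := by
        have hu : IsUnit m := IsUnit.of_mul_eq_one (a := m) (-n) (by linarith)
        rcases Int.isUnit_iff.mp hu with h1 | h1 <;> subst h1 <;> omega
      -- case analysis on degree of f
      rcases Nat.lt_or_ge (f : ℚ[X]).natDegree 1 with hd | hd
      · left
        have hd0 : (f : ℚ[X]).natDegree = 0 := by omega
        have : (f : ℚ[X]) = C ((f : ℚ[X]).coeff 0) :=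
          Polynomial.eq_C_of_natDegree_eq_zero hd0
        rw [hm] at this
        rcases hmcases with ⟨h1, _⟩ | ⟨h1, _⟩ <;> subst h1
        · exact R_unit_of_eq_one (by simpa using this)
        · exact R_unit_of_eq_neg_one (by simpa using this)
      rcases Nat.lt_or_ge (g : ℚ[X]).natDegree 1 with hd' | hd'
      · right
        have hd0 : (g : ℚ[X]).natDegree = 0 := by omega
        have : (g : ℚ[X]) = C ((g : ℚ[X]).coeff 0) :=
          Polynomial.eq_C_of_natDegree_eq_zero hd0
        rw [hn] at this
        rcases hmcases with ⟨_, h1⟩ | ⟨_, h1⟩ <;> subst h1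
        · exact R_unit_of_eq_neg_one (by simpa using this)
        · exact R_unit_of_eq_one (by simpa using this)
      -- both degree 1 : contradiction
      exfalso
      have hdf : (f : ℚ[X]).natDegree = 1 := by omega
      have hdg : (g : ℚ[X]).natDegree = 1 := by omega
      have hf2 : (f : ℚ[X]).coeff 2 = 0 :=
        Polynomial.coeff_eq_zero_of_natDegree_lt (by omega)
      have hg2 : (g : ℚ[X]).coeff 2 = 0 :=
        Polynomial.coeff_eq_zero_of_natDegree_lt (by omega)
      have hc1 : (0 : ℚ) = (f : ℚ[X]).coeff 0 * (g : ℚ[X]).coeff 1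
          + (f : ℚ[X]).coeff 1 * (g : ℚ[X]).coeff 0 := by
        have h := congrArg (fun p : ℚ[X] => p.coeff 1) hval
        simp only [Polynomial.coeff_mul, Finset.Nat.sum_antidiagonal_eq_sum_range_succ_mk,
          Finset.sum_range_succ, Finset.sum_range_zero, coeff_sub, coeff_C_mul, coeff_X_pow,
          coeff_one] at h
        norm_num at h
        linarith [h]
      have hc2 : c = (f : ℚ[X]).coeff 1 * (g : ℚ[X]).coeff 1 := by
        have h := congrArg (fun p : ℚ[X] => p.coeff 2) hval
        simp only [Polynomial.coeff_mul, Finset.Nat.sum_antidiagonal_eq_sum_range_succ_mk,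
          Finset.sum_range_succ, Finset.sum_range_zero, coeff_sub, coeff_C_mul, coeff_X_pow,
          coeff_one] at h
        norm_num [hf2, hg2] at h
        linarith [h]
      apply hns
      refine ⟨(f : ℚ[X]).coeff 1, ?_⟩
      rcases hmcases with ⟨h1, h2⟩ | ⟨h1, h2⟩ <;> subst h1 <;> subst h2 <;>
        · rw [hm, hn] at hc1
          push_cast at hc1
          have hgf : (g : ℚ[X]).coeff 1 = (f : ℚ[X]).coeff 1 := by linarith
          rw [hc2, hgf, sq]
end

section
/- In the ring R of rational polynomials with integer constant term, the element X² + 1 is irreducible in R. -/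
open Polynomial

lemma Xsq_ne_zero : (X : ℚ[X]) ^ 2 + 1 ≠ 0 := by
  intro h
  have : ((X:ℚ[X])^2+1).coeff 0 = 0 := by rw [h]; simp
  simp at this

lemma irr_Xsq : Irreducible ((X : ℚ[X]) ^ 2 + 1) := by
  rw [irreducible_iff_roots_eq_zero_of_degree_le_three]
  · rw [Multiset.eq_zero_iff_forall_notMem]
    intro x hx
    rw [mem_roots Xsq_ne_zero] at hx
    simp [IsRoot] at hx
    nlinarith [sq_nonneg x, hx]
  all_goals
    have : ((X:ℚ[X])^2+1).natDegree = 2 := by compute_degree!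
    omega

lemma aux_unit {a b : Polynomial ℚ} (ha : a ∈ R) (hb : b ∈ R) (h : IsUnit a)
    (hab : (X:ℚ[X])^2 + 1 = a * b) : IsUnit (⟨a, ha⟩ : R) := by
  obtain ⟨c, -, hca⟩ := Polynomial.isUnit_iff.mp h
  obtain ⟨n, hn⟩ := ha
  obtain ⟨m, hm⟩ := hb
  have h1 : (1 : ℚ) = a.coeff 0 * b.coeff 0 := by
    have := congrArg (fun p => p.coeff 0) hab
    simpa [mul_coeff_zero] using this
  have hnm : (n : ℚ) * m = 1 := by rw [← hn, ← hm, ← h1]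
  have hca' : a = C (n : ℚ) := by
    rw [← hca]; congr 1
    have : c = a.coeff 0 := by rw [← hca]; simp
    rw [this, hn]
  refine IsUnit.of_mul_eq_one (⟨C (m:ℚ), ⟨m, by simp⟩⟩ : R) ?_
  apply Subtype.ext
  show a * C (m:ℚ) = 1
  rw [hca', ← C_mul, hnm, C_1]

/-- X² + 1 is irreducible in R. -/
theorem stmt_8 : Irreducible (⟨X ^ 2 + 1, mem_R.mpr ⟨1, by simp⟩⟩ : R) := by
  constructor
  · intro hu
    exact irr_Xsq.not_isUnit (hu.map R.subtype)
  · rintro ⟨a, ha⟩ ⟨b, hb⟩ hab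
    have hab' : (X:ℚ[X])^2 + 1 = a * b := congrArg Subtype.val hab
    rcases irr_Xsq.isUnit_or_isUnit hab' with h | h
    · exact Or.inl (aux_unit ha hb h hab')
    · exact Or.inr (aux_unit hb ha h (by rw [hab', mul_comm]))
end

section
/- For every prime number p and every natural number m, both (1/p^(2m+1))·X² - 1 and (1/p^(2m+1))·X² + 1 are irreducible elements of the ring R of rational polynomials with integer constant term. -/
open Polynomial

/-- Core factorization lemma: any factorization (within integer-constant-term
polynomials) of `C c * X ^ 2 + C ε` with `ε = ±1` and `c` not of the form `-ε r²`
has a trivial factor `±1`. -/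
lemma key_factor (c ε : ℚ) (hc : c ≠ 0) (hε : ε = 1 ∨ ε = -1)
    (hsq : ∀ r : ℚ, c ≠ -ε * r ^ 2)
    (f g : Polynomial ℚ) (hfg : f * g = C c * X ^ 2 + C ε)
    (ha : ∃ n : ℤ, f.coeff 0 = (n : ℚ)) (hb : ∃ n : ℤ, g.coeff 0 = (n : ℚ)) :
    f = 1 ∨ f = -1 ∨ g = 1 ∨ g = -1 := by
  obtain ⟨n, hn⟩ := ha
  obtain ⟨k, hk⟩ := hb
  have hε2 : ε ^ 2 = 1 := by rcases hε with h | h <;> simp [h]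
  have hεne : ε ≠ 0 := by rcases hε with h | h <;> simp [h]
  -- constant coefficient equation
  have h0 : f.coeff 0 * g.coeff 0 = ε := by
    have := congrArg (fun q => q.coeff 0) hfg
    simpa [Polynomial.mul_coeff_zero, coeff_X_pow] using this
  have hnk : n * k = 1 ∨ n * k = -1 := by
    rcases hε with h | h
    · left; exact_mod_cast (by rw [← hn, ← hk, h0, h] : ((n : ℚ) * k = 1))
    · right; exact_mod_cast (by rw [← hn, ← hk, h0, h] : ((n : ℚ) * k = -1))
  have hunit : IsUnit n := by
    rcases hnk with h | h
    · exact IsUnit.of_mul_eq_one (a := n) k h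
    · exact IsUnit.of_mul_eq_one (a := n) (-k) (by linarith)
  have hn1 : n = 1 ∨ n = -1 := Int.isUnit_iff.mp hunit
  have ha0sq : f.coeff 0 ^ 2 = 1 := by
    rcases hn1 with h | h <;> simp [hn, h]
  -- degrees
  have hF : (C c * X ^ 2 + C ε).natDegree = 2 := by
    compute_degree!
  have hne0 : f * g ≠ 0 := by
    rw [hfg]
    intro h
    have := congrArg (fun q => q.coeff 0) h
    simp [coeff_X_pow] at this
    exact hεne this
  have hf0 : f ≠ 0 := fun h => hne0 (by simp [h])
  have hg0 : g ≠ 0 := fun h => hne0 (by simp [h])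
  have hdeg : f.natDegree + g.natDegree = 2 := by
    rw [← Polynomial.natDegree_mul hf0 hg0, hfg, hF]
  rcases Nat.lt_or_ge f.natDegree 1 with hdf | hdf
  · -- f is constant
    have hdf0 : f.natDegree = 0 := by omega
    have hfC : f = C (f.coeff 0) := Polynomial.eq_C_of_natDegree_eq_zero hdf0
    rcases hn1 with h | h
    · left; rw [hfC, hn, h]; simp
    · right; left; rw [hfC, hn, h]; simp
  rcases Nat.lt_or_ge g.natDegree 1 with hdg | hdg
  · have hdg0 : g.natDegree = 0 := by omega
    have hgC : g = C (g.coeff 0) := Polynomial.eq_C_of_natDegree_eq_zero hdg0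
    have hk1 : k = 1 ∨ k = -1 := by
      rcases hnk with h | h
      · exact Int.isUnit_iff.mp (IsUnit.of_mul_eq_one (a := k) n (by linarith))
      · exact Int.isUnit_iff.mp (IsUnit.of_mul_eq_one (a := k) (-n) (by linarith))
    rcases hk1 with h | h
    · right; right; left; rw [hgC, hk, h]; simp
    · right; right; right; rw [hgC, hk, h]; simp
  -- both degree 1
  exfalso
  have hdf1 : f.natDegree = 1 := by omega
  have hdg1 : g.natDegree = 1 := by omega
  have hf : f = C (f.coeff 1) * X + C (f.coeff 0) :=
    Polynomial.eq_X_add_C_of_natDegree_le_one (le_of_eq hdf1)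
  have hg : g = C (g.coeff 1) * X + C (g.coeff 0) :=
    Polynomial.eq_X_add_C_of_natDegree_le_one (le_of_eq hdg1)
  set a1 := f.coeff 1
  set a0 := f.coeff 0
  set b1 := g.coeff 1
  set b0 := g.coeff 0
  rw [hf, hg] at hfg
  rw [show (C a1 * X + C a0) * (C b1 * X + C b0)
      = C (a1 * b1) * X ^ 2 + C (a0 * b1 + a1 * b0) * X + C (a0 * b0) from by
    simp only [C_mul, C_add]; ring] at hfg
  have h1 : a0 * b1 + a1 * b0 = 0 := by
    have := congrArg (fun q => q.coeff 1) hfg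
    simpa [coeff_X_pow, mul_assoc] using this
  have h2 : a1 * b1 = c := by
    have := congrArg (fun q => q.coeff 2) hfg
    simpa [coeff_X_pow, mul_assoc] using this
  exact hsq a1 (by linear_combination -h2 - a1 ^ 2 * h0 + a0 * a1 * h1 - a1 * b1 * ha0sq)

/-- For every prime p and natural m, both (1/p^(2m+1))·X² - 1 and (1/p^(2m+1))·X² + 1
are irreducible in R. -/
theorem stmt_10 (p : ℕ) (hp : p.Prime) (m : ℕ) :
    Irreducible (⟨C (1 / (p : ℚ) ^ (2 * m + 1)) * X ^ 2 - 1, mem_R.mpr ⟨-1, by simp⟩⟩ : R) ∧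
    Irreducible (⟨C (1 / (p : ℚ) ^ (2 * m + 1)) * X ^ 2 + 1, mem_R.mpr ⟨1, by simp⟩⟩ : R) := by
  have hp0 : (0 : ℚ) < (p : ℚ) := by exact_mod_cast hp.pos
  set c : ℚ := 1 / (p : ℚ) ^ (2 * m + 1) with hcdef
  have hcpos : 0 < c := by positivity
  have hc : c ≠ 0 := ne_of_gt hcpos
  -- c is not a rational square
  have hnsq : ∀ r : ℚ, c ≠ r ^ 2 := by
    intro r hr
    have hpne : ((p : ℚ)) ^ (2 * m + 1) ≠ 0 := by positivity
    have hr' : r ^ 2 * (p : ℚ) ^ (2 * m + 1) = 1 := by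
      rw [hcdef] at hr
      field_simp at hr
      linarith [hr]
    apply hp.not_isSquare
    rw [← Rat.isSquare_natCast_iff]
    exact ⟨r * (p : ℚ) ^ (m + 1), by linear_combination (-(p : ℚ)) * hr'⟩
  -- generic irreducibility builder
  have main : ∀ (ε : ℚ), (ε = 1 ∨ ε = -1) → (∀ r : ℚ, c ≠ -ε * r ^ 2) →
      ∀ (hFm : C c * X ^ 2 + C ε ∈ R),
      Irreducible (⟨C c * X ^ 2 + C ε, hFm⟩ : R) := by
    intro ε hε hsq hFm
    constructor
    · intro hu
      have h2 : IsUnit (C c * X ^ 2 + C ε) := by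
        simpa using hu.map R.subtype
      have hd : (C c * X ^ 2 + C ε).natDegree = 0 :=
        Polynomial.natDegree_eq_zero_of_isUnit h2
      have hd2 : (C c * X ^ 2 + C ε).natDegree = 2 := by compute_degree!
      exact absurd (hd.symm.trans hd2) (by norm_num)
    · rintro a b hab
      have hval : a.val * b.val = C c * X ^ 2 + C ε := by
        have := congrArg Subtype.val hab
        simpa using this.symm
      have := key_factor c ε hc hε hsq a.val b.val hval a.2 b.2
      rcases this with h | h | h | h
      · exact Or.inl (by rw [show a = 1 from Subtype.ext h]; exact isUnit_one)
      · exact Or.inl (by rw [show a = -1 from Subtype.ext (by simp [h])]; exact isUnit_one.neg)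
      · exact Or.inr (by rw [show b = 1 from Subtype.ext h]; exact isUnit_one)
      · exact Or.inr (by rw [show b = -1 from Subtype.ext (by simp [h])]; exact isUnit_one.neg)
  have hm1 : C c * X ^ 2 + C (-1 : ℚ) ∈ R := mem_R.mpr ⟨-1, by simp⟩
  have hm2 : C c * X ^ 2 + C (1 : ℚ) ∈ R := mem_R.mpr ⟨1, by simp⟩
  constructor
  · have h := main (-1) (Or.inr rfl) (by intro r; simpa using hnsq r) hm1
    have e : (⟨C c * X ^ 2 - 1, mem_R.mpr ⟨-1, by simp⟩⟩ : R) =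
        (⟨C c * X ^ 2 + C (-1 : ℚ), hm1⟩ : R) := Subtype.ext (by simp [sub_eq_add_neg])
    rw [e]; exact h
  · have h := main 1 (Or.inl rfl) (by intro r h; nlinarith [sq_nonneg r]) hm2
    have e : (⟨C c * X ^ 2 + 1, mem_R.mpr ⟨1, by simp⟩⟩ : R) =
        (⟨C c * X ^ 2 + C (1 : ℚ), hm2⟩ : R) := Subtype.ext (by simp)
    rw [e]; exact h
end

section
/- In the ring R of rational polynomials with integer constant term, there exist infinitely many pairwise distinct elements x such that both x - 1 and x + 1 are irreducible in R; concretely, the elements x_m = (1/2^(2m+1))·X² for m ∈ ℕ are pairwise distinct and x_m - 1 and x_m + 1 are irreducible for every m. -/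
open Polynomial

lemma sq_ne_two (q : ℚ) : q ^ 2 ≠ 2 := by
  intro h
  have h2 : ((q : ℝ)) ^ 2 = 2 := by exact_mod_cast congrArg (fun t : ℚ => (t : ℝ)) h
  have hs : Real.sqrt 2 = |(q : ℝ)| := by rw [← h2, Real.sqrt_sq_eq_abs]
  have hirr := Nat.prime_two.irrational_sqrt
  rw [show ((2 : ℕ) : ℝ) = 2 by norm_num, hs] at hirr
  exact (Rat.not_irrational |q|) (by simpa using hirr)

lemma unit_of_val {g : R} (h : (g : ℚ[X]) = 1 ∨ (g : ℚ[X]) = -1) : IsUnit g := by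
  rcases h with h | h
  · have : g = 1 := Subtype.ext (by simpa using h)
    rw [this]; exact isUnit_one
  · have : g = -1 := Subtype.ext (by simpa using h)
    rw [this]; exact isUnit_one.neg

lemma int_pm {n k : ℤ} {e : ℚ} (he : e = 1 ∨ e = -1) (h : (n : ℚ) * k = e) :
    (n : ℚ) = 1 ∨ (n : ℚ) = -1 := by
  have hu : IsUnit n := by
    rcases he with he | he
    · have h' : (n : ℚ) * k = 1 := he ▸ h
      have : n * k = 1 := by exact_mod_cast h'
      exact IsUnit.of_mul_eq_one (b := _) this
    · have : n * (-k) = 1 := by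
        have h' : (n : ℚ) * (-(k : ℚ)) = 1 := by rw [he] at h; linarith
        exact_mod_cast h'
      exact IsUnit.of_mul_eq_one (b := _) this
  rcases Int.isUnit_iff.mp hu with h1 | h1 <;> simp [h1]

lemma main_irr (c e : ℚ) (hc : c ≠ 0) (he : e = 1 ∨ e = -1)
    (hb : ∀ b : ℚ, b ^ 2 ≠ -(c * e))
    (hmem : C c * X ^ 2 + C e ∈ R) :
    Irreducible (⟨C c * X ^ 2 + C e, hmem⟩ : R) := by
  have hdeg : (C c * X ^ 2 + C e).natDegree = 2 := by
    rw [natDegree_add_C, natDegree_C_mul_X_pow 2 c hc]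
  constructor
  · intro hu
    have hu' : IsUnit (C c * X ^ 2 + C e) := hu.map R.subtype
    have := natDegree_eq_zero_of_isUnit hu'
    omega
  · rintro g h hgh
    have hval : C c * X ^ 2 + C e = (g : ℚ[X]) * (h : ℚ[X]) :=
      congrArg Subtype.val hgh
    have hp0 : (C c * X ^ 2 + C e) ≠ 0 := by
      intro h0; rw [h0] at hdeg; simp at hdeg
    have hg0 : (g : ℚ[X]) ≠ 0 := by
      intro h0; rw [h0, zero_mul] at hval; exact hp0 hval
    have hh0 : (h : ℚ[X]) ≠ 0 := by
      intro h0; rw [h0, mul_zero] at hval; exact hp0 hval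
    have hsum : (g : ℚ[X]).natDegree + (h : ℚ[X]).natDegree = 2 := by
      rw [← natDegree_mul hg0 hh0, ← hval, hdeg]
    obtain ⟨ng, hng⟩ := g.2
    obtain ⟨nh, hnh⟩ := h.2
    have hconst : (ng : ℚ) * nh = e := by
      have := congrArg (fun p => Polynomial.coeff p 0) hval
      simpa [mul_coeff_zero, hng, hnh] using this.symm
    have hgpm := int_pm he hconst
    have hhpm := int_pm he (by rw [mul_comm] at hconst; exact hconst)
    rw [← hng] at hgpm
    rw [← hnh] at hhpm
    rcases Nat.lt_or_ge (g : ℚ[X]).natDegree 1 with hd | hd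
    · left
      apply unit_of_val
      have hgc : (g : ℚ[X]) = C ((g : ℚ[X]).coeff 0) :=
        eq_C_of_natDegree_eq_zero (by omega)
      rcases hgpm with h1 | h1 <;> [left; right] <;> rw [hgc, h1] <;> simp
    · rcases Nat.lt_or_ge (h : ℚ[X]).natDegree 1 with hd' | hd'
      · right
        apply unit_of_val
        have hhc : (h : ℚ[X]) = C ((h : ℚ[X]).coeff 0) :=
          eq_C_of_natDegree_eq_zero (by omega)
        rcases hhpm with h1 | h1 <;> [left; right] <;> rw [hhc, h1] <;> simp
      · exfalso
        set a := (g : ℚ[X]).coeff 1 with ha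
        set u := (g : ℚ[X]).coeff 0 with hu
        set b := (h : ℚ[X]).coeff 1 with hbb
        set v := (h : ℚ[X]).coeff 0 with hv
        have hge : (g : ℚ[X]) = C a * X + C u :=
          eq_X_add_C_of_natDegree_le_one (by omega)
        have hhe : (h : ℚ[X]) = C b * X + C v :=
          eq_X_add_C_of_natDegree_le_one (by omega)
        have hexp : C c * X ^ 2 + C e =
            C (a * b) * X ^ 2 + C (a * v + u * b) * X + C (u * v) := by
          rw [hval, hge, hhe]
          simp only [C_mul, C_add]
          ring
        have h2 : c = a * b := by
          have := congrArg (fun p => Polynomial.coeff p 2) hexp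
          simpa [mul_assoc, coeff_C_mul, coeff_X_pow, coeff_X, coeff_C] using this
        have h1 : a * v + u * b = 0 := by
          have := congrArg (fun p => Polynomial.coeff p 1) hexp
          simpa [mul_assoc, coeff_C_mul, coeff_X_pow, coeff_X, coeff_C] using this.symm
        have huv : u * v = e := by
          have := congrArg (fun p => Polynomial.coeff p 0) hexp
          simpa [mul_assoc, coeff_C_mul, coeff_X_pow, coeff_X, coeff_C] using this.symm
        have hv2 : v * v = 1 := by rcases hhpm with h' | h' <;> rw [h'] <;> norm_num
        have he2 : e * e = 1 := by rcases he with h' | h' <;> rw [h'] <;> norm_num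
        apply hb b
        have hA : a = -(u * b * v) := by linear_combination v * h1 - a * hv2
        have hC : c = -(e * b ^ 2) := by linear_combination h2 + b * hA - b ^ 2 * huv
        linear_combination e * hC - b ^ 2 * he2

/-- There are infinitely many x ∈ R with x - 1 and x + 1 both irreducible; concretely,
the pairwise distinct elements x_m = (1/2^(2m+1))·X² work. -/
theorem stmt_11 :
    let x : ℕ → R := fun m =>
      ⟨C (1 / (2 : ℚ) ^ (2 * m + 1)) * X ^ 2, mem_R.mpr ⟨0, by simp⟩⟩
    Function.Injective x ∧
    (∀ m : ℕ, Irreducible (x m - 1) ∧ Irreducible (x m + 1)) ∧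
    {y : R | Irreducible (y - 1) ∧ Irreducible (y + 1)}.Infinite := by
  intro x
  have hc : ∀ m : ℕ, (1 / (2 : ℚ) ^ (2 * m + 1)) ≠ 0 := by intro m; positivity
  have hinj : Function.Injective x := by
    intro m n h
    have h2 := congrArg (fun z : R => (z : ℚ[X]).coeff 2) h
    simp only [x] at h2
    have h3 : (1 / (2 : ℚ) ^ (2 * m + 1)) = 1 / (2 : ℚ) ^ (2 * n + 1) := by
      simpa using h2
    have h4 : (2 : ℚ) ^ (2 * m + 1) = 2 ^ (2 * n + 1) := by
      have hne : ((2 : ℚ) ^ (2 * n + 1)) ≠ 0 := by positivity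
      have hne' : ((2 : ℚ) ^ (2 * m + 1)) ≠ 0 := by positivity
      rw [div_eq_div_iff hne' hne, one_mul, one_mul] at h3
      exact h3.symm
    have h5 : (2 : ℕ) ^ (2 * m + 1) = 2 ^ (2 * n + 1) := by
      have h6 : ((2 ^ (2 * m + 1) : ℕ) : ℚ) = ((2 ^ (2 * n + 1) : ℕ) : ℚ) := by push_cast; exact h4
      exact_mod_cast h6
    have := Nat.pow_right_injective (le_refl 2) h5
    omega
  have hirr : ∀ m : ℕ, Irreducible (x m - 1) ∧ Irreducible (x m + 1) := by
    intro m
    set c := (1 / (2 : ℚ) ^ (2 * m + 1)) with hcdef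
    have hcpos : 0 < c := by positivity
    constructor
    · have hmem : C c * X ^ 2 + C (-1) ∈ R := R.add_mem (x m).2 (mem_R.mpr ⟨-1, by simp⟩)
      have heq : x m - 1 = (⟨C c * X ^ 2 + C (-1), hmem⟩ : R) := by
        apply Subtype.ext
        push_cast
        simp [x, sub_eq_add_neg, hcdef, one_div]
      rw [heq]
      apply main_irr c (-1) (hc m) (Or.inr rfl)
      intro b hb
      have hkey : (b * 2 ^ (m + 1) : ℚ) ^ 2 = 2 := by
        have h2 : (2 : ℚ) ^ (2 * m + 1) ≠ 0 := by positivity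
        rw [mul_pow, show b ^ 2 = -(c * -1) from hb, hcdef]
        rw [← pow_mul]
        field_simp
        rw [show (m + 1) * 2 = (2 * m + 1) + 1 by ring, pow_succ]
      exact sq_ne_two _ hkey
    · have hmem : C c * X ^ 2 + C 1 ∈ R := R.add_mem (x m).2 (mem_R.mpr ⟨1, by simp⟩)
      have heq : x m + 1 = (⟨C c * X ^ 2 + C 1, hmem⟩ : R) := by
        apply Subtype.ext
        push_cast
        simp [x, hcdef, one_div]
      rw [heq]
      apply main_irr c 1 (hc m) (Or.inl rfl)
      intro b hb
      nlinarith [sq_nonneg b]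
  exact ⟨hinj, hirr, Set.infinite_of_injective_forall_mem hinj hirr⟩
end

section
/- In the ring R of rational polynomials with integer constant term, for all rationals a, c and integers b, d: if (a·X + b)·(c·X + d) = s·X² + e for some rational s > 0 and integer e with e = 1 or e = -1, then b·d = e and a·d + b·c = 0 and a·c = s; consequently b = d = 1 or b = d = -1 when e = 1, and in that case a = -c and s = -a² < 0, a contradiction — hence s·X² + 1 has no factorization into two degree-one elements of R. -/
open Polynomial

/-- Coefficient comparison: if (a·X + b)(c·X + d) = s·X² + e in R with s > 0 and e = ±1,
then b·d = e, a·d + b·c = 0, a·c = s, and the case e = 1 is impossible; hence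
s·X² + 1 admits no factorization into two degree-one elements of R. -/
theorem stmt_18 (a c : ℚ) (b d : ℤ) (s : ℚ) (e : ℤ) (hs : 0 < s) (he : e = 1 ∨ e = -1)
    (hfac : (C a * X + C (b : ℚ)) * (C c * X + C (d : ℚ)) = C s * X ^ 2 + C (e : ℚ)) :
    b * d = e ∧ a * (d : ℚ) + (b : ℚ) * c = 0 ∧ a * c = s ∧ (e = 1 → False) := by
  have h0 := congrArg (fun f => Polynomial.coeff f 0) hfac
  have h1 := congrArg (fun f => Polynomial.coeff f 1) hfac
  have h2 := congrArg (fun f => Polynomial.coeff f 2) hfac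
  simp only [mul_add, add_mul, coeff_add, coeff_C, coeff_C_mul, coeff_X_pow,
    mul_comm (C a * X), mul_assoc, coeff_C_mul, coeff_X_mul, X_mul_C, coeff_mul_C,
    coeff_X_zero, coeff_X_one] at h0 h1 h2
  simp [coeff_X] at h0 h1 h2
  have hbd : b * d = e := by exact_mod_cast h0
  have h1' : a * (d : ℚ) + (b : ℚ) * c = 0 := by linarith [h1]
  have h2' : a * c = s := by linarith [h2]
  refine ⟨hbd, h1', h2', fun he1 => ?_⟩
  subst he1
  have := Int.eq_one_or_neg_one_of_mul_eq_one' hbd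
  rcases this with ⟨hb, hd⟩ | ⟨hb, hd⟩ <;> subst hb <;> subst hd <;>
    push_cast at h1' h2' <;> nlinarith [sq_nonneg a, sq_nonneg c]
end
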